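/- Let q ∈ Δ₄ and θ, φ ∈ ℝ, and let M = M(q,θ,φ) be the Hermitian 4×4 complex matrix with M₁₁ = q₁, M₂₂ = q₂cos²θ + q₃sin²θ, M₃₃ = q₂sin²θ + q₃cos²θ, M₄₄ = q₄, M₁₄ = ((q₃ − q₂)/2)·sin(2θ)·e^{iφ}, M₄₁ = conj(M₁₄), and all other entries zero. Then λ₋ := ½[(q₁ + q₄) − √((q₂ − q₃)²sin²(2θ) + (q₁ − q₄)²)] is an eigenvalue of M, and M is positive semidefinite if and only if 4q₁q₄ ≥ (q₂ − q₃)²sin²(2θ) (equivalently, iff λ₋ ≥ 0). -/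

import Mathlib

open Finset
open scoped ComplexOrder

/-- The probability simplex Δ₄ ⊂ ℝ⁴. -/
def inSimplex (p : Fin 4 → ℝ) : Prop := (∀ i, 0 ≤ p i) ∧ ∑ i, p i = 1

/-- The entanglement witness f(q) = 4 q₁ q₄ − (q₂ − q₃)². -/
noncomputable def fwit (q : Fin 4 → ℝ) : ℝ := 4 * q 0 * q 3 - (q 1 - q 2) ^ 2

/-- The partial transpose M(q,θ,φ) of the rotated two-qubit state:
M₁₁ = q₁, M₂₂ = q₂cos²θ + q₃sin²θ, M₃₃ = q₂sin²θ + q₃cos²θ, M₄₄ = q₄,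
M₁₄ = ((q₃−q₂)/2)·sin(2θ)·e^{iφ}, M₄₁ = conj(M₁₄), all other entries zero. -/
noncomputable def Mmat (q : Fin 4 → ℝ) (θ φ : ℝ) : Matrix (Fin 4) (Fin 4) ℂ :=
  !![(q 0 : ℂ), 0, 0, (((q 2 - q 1) / 2 * Real.sin (2 * θ) : ℝ) : ℂ) * Complex.exp (Complex.I * φ);
     0, ((q 1 * Real.cos θ ^ 2 + q 2 * Real.sin θ ^ 2 : ℝ) : ℂ), 0, 0;
     0, 0, ((q 1 * Real.sin θ ^ 2 + q 2 * Real.cos θ ^ 2 : ℝ) : ℂ), 0;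
     (((q 2 - q 1) / 2 * Real.sin (2 * θ) : ℝ) : ℂ) * Complex.exp (-(Complex.I * φ)), 0, 0,
       (q 3 : ℂ)]

/-- λ₋ = ½[(q₁+q₄) − √((q₂−q₃)²sin²(2θ) + (q₁−q₄)²)] is an eigenvalue of
M(q,θ,φ), and M(q,θ,φ) is positive semidefinite iff 4q₁q₄ ≥ (q₂−q₃)²sin²(2θ),
equivalently iff λ₋ ≥ 0. -/
lemma auxEig (a d m1 m2 b lam : ℝ) (c c' : ℂ) (hcc : c' * c = 1) (hc0 : c ≠ 0)
    (hquad : lam ^ 2 - (a + d) * lam + (a * d - b ^ 2) = 0) :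
    ∃ v : Fin 4 → ℂ, v ≠ 0 ∧
      (!![(a:ℂ), 0, 0, (b:ℂ) * c; 0, (m1:ℂ), 0, 0; 0, 0, (m2:ℂ), 0;
          (b:ℂ) * c', 0, 0, (d:ℂ)] : Matrix (Fin 4) (Fin 4) ℂ).mulVec v = ((lam:ℝ):ℂ) • v := by
  have hquadC : (lam:ℂ) ^ 2 - ((a:ℂ) + (d:ℂ)) * (lam:ℂ) + ((a:ℂ) * (d:ℂ) - (b:ℂ) ^ 2) = 0 := by
    exact_mod_cast congrArg (Complex.ofReal) hquad
  by_cases h : b = 0 ∧ lam = a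
  · refine ⟨![1, 0, 0, 0], ?_, ?_⟩
    · intro h0
      have := congr_fun h0 0
      simp at this
    · funext i
      fin_cases i <;>
        simp [Matrix.mulVec, dotProduct, Fin.sum_univ_four, h.1, h.2]
  · push_neg at h
    refine ⟨![(b:ℂ) * c, 0, 0, ((lam - a : ℝ):ℂ)], ?_, ?_⟩
    · intro h0
      have h3 := congr_fun h0 3
      have h00 := congr_fun h0 0
      simp [hc0] at h00 h3
      have : lam = a := by linarith [sub_eq_zero.mp (by exact_mod_cast h3)]
      exact (h h00) this
    · funext i
      fin_cases i <;>
        simp [Matrix.mulVec, dotProduct, Fin.sum_univ_four] <;> push_cast <;>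
        try ring
      linear_combination ((b:ℂ)^2) * hcc - hquadC



lemma auxPSD (a d m1 m2 b : ℝ) (c c' : ℂ) (ha : 0 ≤ a) (hd : 0 ≤ d)
    (hm1 : 0 ≤ m1) (hm2 : 0 ≤ m2) (hcc : c' * c = 1)
    (hc1 : (starRingEnd ℂ) c = c') (hc2 : (starRingEnd ℂ) c' = c) :
    (!![(a:ℂ), 0, 0, (b:ℂ) * c; 0, (m1:ℂ), 0, 0; 0, 0, (m2:ℂ), 0;
        (b:ℂ) * c', 0, 0, (d:ℂ)] : Matrix (Fin 4) (Fin 4) ℂ).PosSemidef ↔ b ^ 2 ≤ a * d := by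
  set N : Matrix (Fin 4) (Fin 4) ℂ :=
    !![(a:ℂ), 0, 0, (b:ℂ) * c; 0, (m1:ℂ), 0, 0; 0, 0, (m2:ℂ), 0;
       (b:ℂ) * c', 0, 0, (d:ℂ)] with hN
  have form : ∀ x : Fin 4 → ℂ, dotProduct (star x) (N.mulVec x) =
      (starRingEnd ℂ) (x 0) * ((a:ℂ) * x 0 + (b:ℂ) * c * x 3)
      + (m1:ℂ) * ((starRingEnd ℂ) (x 1) * x 1)
      + (m2:ℂ) * ((starRingEnd ℂ) (x 2) * x 2)
      + (starRingEnd ℂ) (x 3) * ((b:ℂ) * c' * x 0 + (d:ℂ) * x 3) := by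
    intro x
    simp [hN, Matrix.mulVec, dotProduct, Fin.sum_univ_four, Complex.star_def,
      Matrix.vecHead, Matrix.vecTail]
    ring
  have real_of : ∀ (v : Fin 4 → ℂ) (r : ℝ),
      dotProduct (star v) (N.mulVec v) = ((r:ℝ):ℂ) → N.PosSemidef → 0 ≤ r := by
    intro v r hv h
    have := h.dotProduct_mulVec_nonneg v
    rw [hv] at this
    exact_mod_cast this
  constructor
  · intro h
    have r1 : (0:ℝ) ≤ (a * d - b ^ 2) * d := by
      refine real_of ![(d:ℂ), 0, 0, -((b:ℂ) * c')] _ ?_ h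
      rw [form]
      simp [map_mul, Complex.conj_ofReal, hc1, hc2]
      push_cast
      linear_combination (-(d:ℂ) * (b:ℂ) ^ 2) * hcc
    have r2 : (0:ℝ) ≤ (a * d - b ^ 2) * a := by
      refine real_of ![-((b:ℂ) * c), 0, 0, (a:ℂ)] _ ?_ h
      rw [form]
      simp [map_mul, Complex.conj_ofReal, hc1, hc2]
      push_cast
      linear_combination (-(a:ℂ) * (b:ℂ) ^ 2) * hcc
    have r3 : (0:ℝ) ≤ a - 2 * b ^ 2 + d * b ^ 2 := by
      refine real_of ![1, 0, 0, -((b:ℂ) * c')] _ ?_ h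
      rw [form]
      simp [map_mul, Complex.conj_ofReal, hc1, hc2]
      push_cast
      linear_combination ((d:ℂ) * (b:ℂ)^2 - 2 * (b:ℂ) ^ 2) * hcc
    by_contra hlt
    push_neg at hlt
    have ha0 : a = 0 := by nlinarith
    have hd0 : d = 0 := by nlinarith
    nlinarith
  · intro hcond
    have hherm : N.IsHermitian := by
      refine Matrix.IsHermitian.ext fun i j => ?_
      fin_cases i <;> fin_cases j <;>
        simp [hN, Matrix.conjTranspose_apply, map_mul, Complex.conj_ofReal, hc1, hc2,
          Matrix.vecHead, Matrix.vecTail]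
    refine Matrix.PosSemidef.of_dotProduct_mulVec_nonneg hherm fun x => ?_
    rw [form x]
    by_cases ha0 : a = 0
    · have hb0 : b = 0 := by nlinarith [sq_nonneg b]
      have hE : (starRingEnd ℂ) (x 0) * ((a:ℂ) * x 0 + (b:ℂ) * c * x 3)
          + (m1:ℂ) * ((starRingEnd ℂ) (x 1) * x 1)
          + (m2:ℂ) * ((starRingEnd ℂ) (x 2) * x 2)
          + (starRingEnd ℂ) (x 3) * ((b:ℂ) * c' * x 0 + (d:ℂ) * x 3)
          = (m1:ℂ) * (star (x 1) * x 1) + (m2:ℂ) * (star (x 2) * x 2)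
            + (d:ℂ) * (star (x 3) * x 3) := by
        rw [ha0, hb0]
        simp [Complex.star_def]
        ring
      rw [hE]
      have t1 : (0:ℂ) ≤ (m1:ℂ) * (star (x 1) * x 1) :=
        mul_nonneg (by exact_mod_cast hm1) (star_mul_self_nonneg _)
      have t2 : (0:ℂ) ≤ (m2:ℂ) * (star (x 2) * x 2) :=
        mul_nonneg (by exact_mod_cast hm2) (star_mul_self_nonneg _)
      have t3 : (0:ℂ) ≤ (d:ℂ) * (star (x 3) * x 3) :=
        mul_nonneg (by exact_mod_cast hd) (star_mul_self_nonneg _)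
      exact add_nonneg (add_nonneg t1 t2) t3
    · have hapos : 0 < a := lt_of_le_of_ne ha (Ne.symm ha0)
      set u : ℂ := (a:ℂ) * x 0 + (b:ℂ) * c * x 3 with hu
      have key : ((a:ℝ):ℂ) * ((starRingEnd ℂ) (x 0) * ((a:ℂ) * x 0 + (b:ℂ) * c * x 3)
          + (m1:ℂ) * ((starRingEnd ℂ) (x 1) * x 1)
          + (m2:ℂ) * ((starRingEnd ℂ) (x 2) * x 2)
          + (starRingEnd ℂ) (x 3) * ((b:ℂ) * c' * x 0 + (d:ℂ) * x 3))
          = star u * u + (((a * d - b ^ 2 : ℝ)):ℂ) * (star (x 3) * x 3)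
            + (((a * m1 : ℝ)):ℂ) * (star (x 1) * x 1)
            + (((a * m2 : ℝ)):ℂ) * (star (x 2) * x 2) := by
        have hsu : star u = (a:ℂ) * (starRingEnd ℂ) (x 0)
            + (b:ℂ) * c' * (starRingEnd ℂ) (x 3) := by
          simp [hu, Complex.star_def, map_mul, Complex.conj_ofReal, hc1]
        rw [hsu, hu]
        simp only [Complex.star_def]
        push_cast
        linear_combination (-(b:ℂ)^2 * ((starRingEnd ℂ) (x 3)) * (x 3)) * hcc
      have hnn : (0:ℂ) ≤ star u * u + (((a * d - b ^ 2 : ℝ)):ℂ) * (star (x 3) * x 3)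
            + (((a * m1 : ℝ)):ℂ) * (star (x 1) * x 1)
            + (((a * m2 : ℝ)):ℂ) * (star (x 2) * x 2) := by
        have t0 := star_mul_self_nonneg u
        have t3 : (0:ℂ) ≤ (((a * d - b ^ 2 : ℝ)):ℂ) * (star (x 3) * x 3) :=
          mul_nonneg (by exact_mod_cast (by linarith : (0:ℝ) ≤ a * d - b ^ 2))
            (star_mul_self_nonneg _)
        have t1 : (0:ℂ) ≤ (((a * m1 : ℝ)):ℂ) * (star (x 1) * x 1) :=
          mul_nonneg (by exact_mod_cast mul_nonneg ha hm1) (star_mul_self_nonneg _)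
        have t2 : (0:ℂ) ≤ (((a * m2 : ℝ)):ℂ) * (star (x 2) * x 2) :=
          mul_nonneg (by exact_mod_cast mul_nonneg ha hm2) (star_mul_self_nonneg _)
        exact add_nonneg (add_nonneg (add_nonneg t0 t3) t1) t2
      rw [← key] at hnn
      have hainv : (0:ℂ) ≤ ((a⁻¹ : ℝ) : ℂ) := by
        exact_mod_cast le_of_lt (inv_pos.mpr hapos)
      have := mul_nonneg hainv hnn
      rw [← mul_assoc] at this
      have hsimp : ((a⁻¹ : ℝ) : ℂ) * ((a:ℝ):ℂ) = 1 := by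
        push_cast
        field_simp
      rwa [hsimp, one_mul] at this


theorem Mmat_eigenvalue_and_psd (q : Fin 4 → ℝ) (hq : inSimplex q) (θ φ : ℝ) :
    (∃ v : Fin 4 → ℂ, v ≠ 0 ∧ (Mmat q θ φ).mulVec v =
        ((((q 0 + q 3) -
            Real.sqrt ((q 1 - q 2) ^ 2 * Real.sin (2 * θ) ^ 2 + (q 0 - q 3) ^ 2)) / 2 : ℝ) : ℂ)
          • v) ∧
    ((Mmat q θ φ).PosSemidef ↔ (q 1 - q 2) ^ 2 * Real.sin (2 * θ) ^ 2 ≤ 4 * q 0 * q 3) ∧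
    ((Mmat q θ φ).PosSemidef ↔
      0 ≤ ((q 0 + q 3) -
            Real.sqrt ((q 1 - q 2) ^ 2 * Real.sin (2 * θ) ^ 2 + (q 0 - q 3) ^ 2)) / 2) := by
  obtain ⟨hpos, hsum⟩ := hq
  have ha : (0:ℝ) ≤ q 0 := hpos 0
  have hd : (0:ℝ) ≤ q 3 := hpos 3
  have h1 : (0:ℝ) ≤ q 1 := hpos 1
  have h2 : (0:ℝ) ≤ q 2 := hpos 2
  have hm1 : (0:ℝ) ≤ q 1 * Real.cos θ ^ 2 + q 2 * Real.sin θ ^ 2 := by positivity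
  have hm2 : (0:ℝ) ≤ q 1 * Real.sin θ ^ 2 + q 2 * Real.cos θ ^ 2 := by positivity
  have hc0 : Complex.exp (Complex.I * φ) ≠ 0 := Complex.exp_ne_zero _
  have hcc : Complex.exp (-(Complex.I * φ)) * Complex.exp (Complex.I * φ) = 1 := by
    rw [← Complex.exp_add]; simp
  have hc1 : (starRingEnd ℂ) (Complex.exp (Complex.I * φ)) = Complex.exp (-(Complex.I * φ)) := by
    rw [← Complex.exp_conj]
    congr 1
    simp [Complex.conj_I]
  have hc2 : (starRingEnd ℂ) (Complex.exp (-(Complex.I * φ))) = Complex.exp (Complex.I * φ) := by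
    rw [← Complex.exp_conj]
    congr 1
    simp [Complex.conj_I]
  have hM : Mmat q θ φ =
      !![((q 0 : ℝ):ℂ), 0, 0, (((q 2 - q 1) / 2 * Real.sin (2 * θ) : ℝ):ℂ) * Complex.exp (Complex.I * φ);
         0, ((q 1 * Real.cos θ ^ 2 + q 2 * Real.sin θ ^ 2 : ℝ):ℂ), 0, 0;
         0, 0, ((q 1 * Real.sin θ ^ 2 + q 2 * Real.cos θ ^ 2 : ℝ):ℂ), 0;
         (((q 2 - q 1) / 2 * Real.sin (2 * θ) : ℝ):ℂ) * Complex.exp (-(Complex.I * φ)), 0, 0,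
           ((q 3 : ℝ):ℂ)] := rfl
  set X : ℝ := (q 1 - q 2) ^ 2 * Real.sin (2 * θ) ^ 2 + (q 0 - q 3) ^ 2 with hX
  have hXnn : (0:ℝ) ≤ X := by positivity
  have hs2 : Real.sqrt X ^ 2 = X := Real.sq_sqrt hXnn
  have hsnn : (0:ℝ) ≤ Real.sqrt X := Real.sqrt_nonneg X
  have hquad : (((q 0 + q 3) - Real.sqrt X) / 2) ^ 2
      - (q 0 + q 3) * (((q 0 + q 3) - Real.sqrt X) / 2)
      + (q 0 * q 3 - ((q 2 - q 1) / 2 * Real.sin (2 * θ)) ^ 2) = 0 := by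
    linear_combination hs2 / 4
  have hcond : ((q 2 - q 1) / 2 * Real.sin (2 * θ)) ^ 2 ≤ q 0 * q 3 ↔
      (q 1 - q 2) ^ 2 * Real.sin (2 * θ) ^ 2 ≤ 4 * q 0 * q 3 := by
    constructor <;> intro h <;> nlinarith [h]
  refine ⟨?_, ?_, ?_⟩
  · rw [hM]
    exact auxEig (q 0) (q 3) (q 1 * Real.cos θ ^ 2 + q 2 * Real.sin θ ^ 2)
      (q 1 * Real.sin θ ^ 2 + q 2 * Real.cos θ ^ 2)
      ((q 2 - q 1) / 2 * Real.sin (2 * θ)) (((q 0 + q 3) - Real.sqrt X) / 2)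
      _ _ hcc hc0 hquad
  · rw [hM, auxPSD _ _ _ _ _ _ _ ha hd hm1 hm2 hcc hc1 hc2]
    exact hcond
  · rw [hM, auxPSD _ _ _ _ _ _ _ ha hd hm1 hm2 hcc hc1 hc2]
    rw [hcond]
    constructor
    · intro h
      have hle : X ≤ (q 0 + q 3) ^ 2 := by nlinarith
      have : Real.sqrt X ≤ q 0 + q 3 := by
        calc Real.sqrt X ≤ Real.sqrt ((q 0 + q 3) ^ 2) := Real.sqrt_le_sqrt hle
        _ = q 0 + q 3 := Real.sqrt_sq (by linarith)
      linarith
    · intro h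
      have hle : Real.sqrt X ≤ q 0 + q 3 := by linarith
      have := pow_le_pow_left₀ hsnn hle 2
      rw [hs2] at this
      nlinarith
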